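/- Let E be a unital quantum channel on M_n with Kraus operators {E_i}. Then the fixed point set of E†∘E equals the commutant {ρ ∈ M_n : [ρ, E_i†E_j] = 0 for all i,j}. -/

import Mathlib

open Matrix Finset

set_option maxHeartbeats 1000000

lemma trace_mul_conjT_eq {n : ℕ} (M : Matrix (Fin n) (Fin n) ℂ) :
    trace (M * Mᴴ) = ((∑ a, ∑ b, Complex.normSq (M a b) : ℝ) : ℂ) := by
  show ∑ a, (M * Mᴴ) a a = _
  push_cast
  refine Finset.sum_congr rfl fun a _ => ?_
  rw [Matrix.mul_apply]
  refine Finset.sum_congr rfl fun b _ => ?_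
  rw [conjTranspose_apply, ← Complex.mul_conj]
  rfl

lemma eq_zero_of_normSq_sum {n : ℕ} (M : Matrix (Fin n) (Fin n) ℂ)
    (h : ∑ a, ∑ b, Complex.normSq (M a b) = 0) : M = 0 := by
  have h1 := (Finset.sum_eq_zero_iff_of_nonneg (fun a _ =>
    Finset.sum_nonneg fun b _ => Complex.normSq_nonneg _)).mp h
  ext a b
  have h2 := (Finset.sum_eq_zero_iff_of_nonneg (fun b _ =>
    Complex.normSq_nonneg _)).mp (h1 a (mem_univ a)) b (mem_univ b)
  simpa using Complex.normSq_eq_zero.mp h2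

theorem fixedPoints_dual_comp_eq_commutant {n m : ℕ}
    (K : Fin m → Matrix (Fin n) (Fin n) ℂ)
    (hTP : ∑ i, (K i)ᴴ * K i = 1)
    (hUnital : ∑ i, K i * (K i)ᴴ = 1) :
    {ρ : Matrix (Fin n) (Fin n) ℂ |
        ∑ i, (K i)ᴴ * (∑ j, K j * ρ * (K j)ᴴ) * K i = ρ} =
    {ρ : Matrix (Fin n) (Fin n) ℂ |
        ∀ i j, ρ * ((K i)ᴴ * K j) = ((K i)ᴴ * K j) * ρ} := by
  ext ρ
  simp only [Set.mem_setOf_eq]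
  set A : Fin m → Fin m → Matrix (Fin n) (Fin n) ℂ := fun i j => (K i)ᴴ * K j with hA
  have hAH : ∀ i j, (A i j)ᴴ = A j i := by
    intro i j; simp [hA, conjTranspose_mul, mul_assoc]
  have hAA' : ∑ i, ∑ j, A i j * (A i j)ᴴ = 1 := by
    calc ∑ i, ∑ j, A i j * (A i j)ᴴ
        = ∑ i, (K i)ᴴ * (∑ j, K j * (K j)ᴴ) * K i := by
          refine Finset.sum_congr rfl fun i _ => ?_
          rw [Finset.mul_sum, Finset.sum_mul]
          refine Finset.sum_congr rfl fun j _ => ?_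
          simp [hA, conjTranspose_mul, mul_assoc]
      _ = 1 := by rw [hUnital]; simpa using hTP
  have hA'A : ∑ i, ∑ j, (A i j)ᴴ * A i j = 1 := by
    rw [Finset.sum_comm]
    calc ∑ j, ∑ i, (A i j)ᴴ * A i j
        = ∑ j, (K j)ᴴ * (∑ i, K i * (K i)ᴴ) * K j := by
          refine Finset.sum_congr rfl fun j _ => ?_
          rw [Finset.mul_sum, Finset.sum_mul]
          refine Finset.sum_congr rfl fun i _ => ?_
          simp [hA, conjTranspose_mul, mul_assoc]
      _ = 1 := by rw [hUnital]; simpa using hTP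
  constructor
  · -- fixed point → commutant
    intro hfix
    have hfix' : ∑ i, ∑ j, A i j * ρ * (A i j)ᴴ = ρ := by
      calc ∑ i, ∑ j, A i j * ρ * (A i j)ᴴ
          = ∑ i, (K i)ᴴ * (∑ j, K j * ρ * (K j)ᴴ) * K i := by
            refine Finset.sum_congr rfl fun i _ => ?_
            rw [Finset.mul_sum, Finset.sum_mul]
            refine Finset.sum_congr rfl fun j _ => ?_
            simp [hA, conjTranspose_mul, mul_assoc]
        _ = ρ := hfix
    have hfix'' : ∑ i, ∑ j, (A i j)ᴴ * ρ * A i j = ρ := by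
      rw [Finset.sum_comm]
      calc ∑ j, ∑ i, (A i j)ᴴ * ρ * A i j
          = ∑ j, ∑ i, A j i * ρ * (A j i)ᴴ := by
            refine Finset.sum_congr rfl fun j _ => ?_
            refine Finset.sum_congr rfl fun i _ => ?_
            rw [hAH, hAH]
        _ = ρ := hfix'
    set M : Fin m → Fin m → Matrix (Fin n) (Fin n) ℂ :=
      fun i j => ρ * A i j - A i j * ρ with hM
    have expand : ∀ i j, trace (M i j * (M i j)ᴴ) =
        trace (A i j * (A i j)ᴴ * (ρᴴ * ρ))
        - trace ((A i j)ᴴ * ρ * A i j * ρᴴ)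
        - trace (A i j * ρ * (A i j)ᴴ * ρᴴ)
        + trace ((A i j)ᴴ * A i j * (ρ * ρᴴ)) := by
      intro i j
      set B := A i j
      have hMM : M i j * (M i j)ᴴ =
          ρ * B * (Bᴴ * ρᴴ) - ρ * B * (ρᴴ * Bᴴ) - B * ρ * (Bᴴ * ρᴴ)
            + B * ρ * (ρᴴ * Bᴴ) := by
        simp only [hM, conjTranspose_sub, conjTranspose_mul]
        noncomm_ring
      rw [hMM, trace_add, trace_sub, trace_sub]
      have e1 : trace (ρ * B * (Bᴴ * ρᴴ)) = trace (B * Bᴴ * (ρᴴ * ρ)) := by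
        rw [mul_assoc, trace_mul_comm ρ]
        congr 1
        simp only [mul_assoc]
      have e2 : trace (ρ * B * (ρᴴ * Bᴴ)) = trace (Bᴴ * ρ * B * ρᴴ) := by
        rw [← mul_assoc, trace_mul_comm _ Bᴴ]
        congr 1
        simp only [mul_assoc]
      have e3 : trace (B * ρ * (Bᴴ * ρᴴ)) = trace (B * ρ * (A i j)ᴴ * ρᴴ) := by
        congr 1
        simp only [mul_assoc]; rfl
      have e4 : trace (B * ρ * (ρᴴ * Bᴴ)) = trace (Bᴴ * B * (ρ * ρᴴ)) := by
        rw [← mul_assoc, trace_mul_comm _ Bᴴ]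
        congr 1
        simp only [mul_assoc]
      rw [e1, e2, e3, e4]
    have hS : ∑ i, ∑ j, trace (M i j * (M i j)ᴴ) = 0 := by
      calc ∑ i, ∑ j, trace (M i j * (M i j)ᴴ)
          = trace ((∑ i, ∑ j, A i j * (A i j)ᴴ) * (ρᴴ * ρ))
            - trace ((∑ i, ∑ j, (A i j)ᴴ * ρ * A i j) * ρᴴ)
            - trace ((∑ i, ∑ j, A i j * ρ * (A i j)ᴴ) * ρᴴ)
            + trace ((∑ i, ∑ j, (A i j)ᴴ * A i j) * (ρ * ρᴴ)) := by
            simp only [expand, Finset.sum_sub_distrib, Finset.sum_add_distrib,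
              Finset.sum_mul, trace_sum]
        _ = 0 := by
            rw [hAA', hA'A, hfix', hfix'', one_mul, one_mul,
              trace_mul_comm ρᴴ ρ]
            ring
    have hS' : ∑ i, ∑ j, (∑ a, ∑ b, Complex.normSq (M i j a b)) = 0 := by
      simp only [trace_mul_conjT_eq] at hS
      exact_mod_cast hS
    intro i j
    have h1 := (Finset.sum_eq_zero_iff_of_nonneg (fun i _ =>
      Finset.sum_nonneg fun j _ => Finset.sum_nonneg fun a _ =>
        Finset.sum_nonneg fun b _ => Complex.normSq_nonneg _)).mp hS' i (mem_univ i)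
    have h2 := (Finset.sum_eq_zero_iff_of_nonneg (fun j _ =>
      Finset.sum_nonneg fun a _ =>
        Finset.sum_nonneg fun b _ => Complex.normSq_nonneg _)).mp h1 j (mem_univ j)
    have h3 : M i j = 0 := eq_zero_of_normSq_sum _ h2
    have h4 : ρ * A i j - A i j * ρ = 0 := h3
    exact sub_eq_zero.mp h4
  · -- commutant → fixed point
    intro hcomm
    calc ∑ i, (K i)ᴴ * (∑ j, K j * ρ * (K j)ᴴ) * K i
        = ∑ i, ∑ j, A i j * ρ * (A i j)ᴴ := by
          refine Finset.sum_congr rfl fun i _ => ?_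
          rw [Finset.mul_sum, Finset.sum_mul]
          refine Finset.sum_congr rfl fun j _ => ?_
          simp [hA, conjTranspose_mul, mul_assoc]
      _ = ∑ i, ∑ j, ρ * (A i j * (A i j)ᴴ) := by
          refine Finset.sum_congr rfl fun i _ => ?_
          refine Finset.sum_congr rfl fun j _ => ?_
          rw [← mul_assoc, ← hcomm i j, mul_assoc]
      _ = ρ := by
          simp only [← Finset.mul_sum]
          rw [hAA', mul_one]
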